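/- A G-graded commutative ring R is a Gelfand graded ring (every homogeneous prime ideal is contained in a unique graded maximal ideal) if and only if GMax(R) is a retract of GSpec(R) with respect to the Zariski topology, i.e., there exists a continuous map φ: GSpec(R) → GMax(R) fixing every graded maximal ideal. -/

import Mathlib

section GradedGelfand

variable {G : Type*} [AddGroup G] [DecidableEq G] {R : Type*} [CommRing R]
variable (𝒜 : G → AddSubgroup R) [GradedRing 𝒜]

/-- A homogeneous (graded) prime ideal: a proper graded ideal that is prime
with respect to homogeneous elements. -/
def IsGradedPrime (P : Ideal R) : Prop :=
  P.IsHomogeneous 𝒜 ∧ P ≠ ⊤ ∧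
    ∀ a b : R, SetLike.IsHomogeneousElem 𝒜 a → SetLike.IsHomogeneousElem 𝒜 b →
      a * b ∈ P → a ∈ P ∨ b ∈ P

/-- A graded maximal ideal: a proper graded ideal maximal among proper graded ideals. -/
def IsGradedMaximal (M : Ideal R) : Prop :=
  M.IsHomogeneous 𝒜 ∧ M ≠ ⊤ ∧
    ∀ J : Ideal R, J.IsHomogeneous 𝒜 → M ≤ J → J ≠ ⊤ → J = M

/-- The homogeneous prime spectrum of a graded ring. -/
def GSpec := { P : Ideal R // IsGradedPrime 𝒜 P }

/-- The Zariski topology on the homogeneous prime spectrum, generated by the basic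
open sets `D_G(r)` for homogeneous `r`; the closed sets are exactly the `V_G(I)`
for graded ideals `I`. -/
instance : TopologicalSpace (GSpec 𝒜) :=
  TopologicalSpace.generateFrom
    { U | ∃ r : R, SetLike.IsHomogeneousElem 𝒜 r ∧ U = { P : GSpec 𝒜 | r ∉ P.1 } }

/-- The set of graded maximal ideals inside the homogeneous prime spectrum. -/
def GMax : Set (GSpec 𝒜) := { P | IsGradedMaximal 𝒜 P.1 }

/-- A Gelfand graded ring: every homogeneous prime ideal is contained in a unique
graded maximal ideal. -/
def IsGelfandGraded : Prop :=
  ∀ P : Ideal R, IsGradedPrime 𝒜 P →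
    ∃! M : Ideal R, IsGradedMaximal 𝒜 M ∧ P ≤ M

/-- A pm⁺ graded ring: for every homogeneous prime `P`, the homogeneous primes
containing `P` form a chain. -/
def IsPMPlusGraded : Prop :=
  ∀ P Q Q' : Ideal R, IsGradedPrime 𝒜 P → IsGradedPrime 𝒜 Q → IsGradedPrime 𝒜 Q' →
    P ≤ Q → P ≤ Q' → Q ≤ Q' ∨ Q' ≤ Q

end GradedGelfand

section AuxLemmas

open DirectSum TopologicalSpace

variable {G : Type*} [AddGroup G] [DecidableEq G] {R : Type*} [CommRing R]
variable (𝒜 : G → AddSubgroup R) [GradedRing 𝒜]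

/-- Every proper graded ideal is contained in a graded maximal ideal. -/
lemma aux_exists_gradedMaximal {I : Ideal R} (hI : I.IsHomogeneous 𝒜) (hne : I ≠ ⊤) :
    ∃ M : Ideal R, IsGradedMaximal 𝒜 M ∧ I ≤ M := by
  have hch : ∀ c ⊆ {J : Ideal R | J.IsHomogeneous 𝒜 ∧ J ≠ ⊤}, IsChain (· ≤ ·) c →
      ∀ y ∈ c, ∃ ub ∈ {J : Ideal R | J.IsHomogeneous 𝒜 ∧ J ≠ ⊤}, ∀ z ∈ c, z ≤ ub := by
    intro c hcs hchain y hy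
    refine ⟨sSup c, ⟨?_, ?_⟩, fun z hz => le_sSup hz⟩
    · intro i x hx
      obtain ⟨J, hJc, hxJ⟩ := (Submodule.mem_sSup_of_directed ⟨y, hy⟩
        (hchain.directedOn)).mp hx
      exact le_sSup hJc ((hcs hJc).1 i hxJ)
    · intro htop
      have h1 : (1 : R) ∈ sSup c := htop ▸ Submodule.mem_top
      obtain ⟨J, hJc, hxJ⟩ := (Submodule.mem_sSup_of_directed ⟨y, hy⟩
        (hchain.directedOn)).mp h1
      exact (hcs hJc).2 ((Ideal.eq_top_iff_one J).mpr hxJ)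
  obtain ⟨M, hIM, hMmax⟩ := zorn_le_nonempty₀
      {J : Ideal R | J.IsHomogeneous 𝒜 ∧ J ≠ ⊤} hch I ⟨hI, hne⟩
  exact ⟨M, ⟨hMmax.1.1, hMmax.1.2,
    fun J hJ hMJ hJne => le_antisymm (hMmax.2 ⟨hJ, hJne⟩ hMJ) hMJ⟩, hIM⟩

/-- A graded maximal ideal is graded prime. -/
lemma aux_gradedMaximal_isGradedPrime {M : Ideal R} (hM : IsGradedMaximal 𝒜 M) :
    IsGradedPrime 𝒜 M := by
  obtain ⟨hMh, hMne, hMmax⟩ := hM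
  refine ⟨hMh, hMne, fun a b ha hb hab => ?_⟩
  by_cases haM : a ∈ M
  · exact Or.inl haM
  · right
    have hJ : (M ⊔ Ideal.span {a}).IsHomogeneous 𝒜 :=
      hMh.sup (Ideal.homogeneous_span 𝒜 {a} (by rintro x rfl; exact ha))
    have htop : M ⊔ Ideal.span {a} = ⊤ := by
      by_contra hne
      have := hMmax _ hJ le_sup_left hne
      exact haM (this ▸ Submodule.mem_sup_right (Ideal.mem_span_singleton_self a))
    have h1 : (1 : R) ∈ M ⊔ Ideal.span {a} := htop ▸ Submodule.mem_top
    obtain ⟨m, hm, y, hy, h1⟩ := Submodule.mem_sup.mp h1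
    obtain ⟨c, rfl⟩ := Ideal.mem_span_singleton'.mp hy
    have hb2 : b = m * b + c * (a * b) := by linear_combination (-b) * h1
    rw [hb2]
    exact M.add_mem (M.mul_mem_right b hm) (M.mul_mem_left c hab)

/-- If every homogeneous element of a graded ideal `I` lies in `J`, then `I ≤ J`. -/
lemma aux_le_of_homogeneous {I J : Ideal R} (hI : I.IsHomogeneous 𝒜)
    (h : ∀ x : R, SetLike.IsHomogeneousElem 𝒜 x → x ∈ I → x ∈ J) : I ≤ J := by
  classical
  intro x hx
  rw [← DirectSum.sum_support_decompose 𝒜 x]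
  exact J.sum_mem fun i _ => h _ ⟨i, SetLike.coe_mem _⟩ (hI i hx)

lemma aux_isOpen_D {r : R} (hr : SetLike.IsHomogeneousElem 𝒜 r) :
    IsOpen { P : GSpec 𝒜 | r ∉ P.1 } :=
  isOpen_generateFrom_of_mem ⟨r, hr, rfl⟩

/-- Specialization: if `P ≤ Q` then `Q` lies in the closure of `{P}`. -/
lemma aux_mem_closure_of_le {P Q : GSpec 𝒜} (h : P.1 ≤ Q.1) :
    Q ∈ closure {P} := by
  rw [mem_closure_iff]
  intro o ho hQo
  refine ⟨P, ?_, rfl⟩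
  have ho' : TopologicalSpace.GenerateOpen
      { U | ∃ r : R, SetLike.IsHomogeneousElem 𝒜 r ∧ U = { P : GSpec 𝒜 | r ∉ P.1 } } o := ho
  clear ho
  induction ho' with
  | basic s hs =>
    obtain ⟨r, hr, rfl⟩ := hs
    exact fun hrP => hQo (h hrP)
  | univ => trivial
  | inter s t _ _ ihs iht => exact ⟨ihs hQo.1, iht hQo.2⟩
  | sUnion S _ ih =>
    obtain ⟨s, hsS, hQs⟩ := hQo
    exact ⟨s, hsS, ih s hsS hQs⟩

/-- Co-specialization: membership in the closure of a point forces containment. -/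
lemma aux_le_of_mem_closure {P Q : GSpec 𝒜} (h : Q ∈ closure {P}) :
    P.1 ≤ Q.1 := by
  refine aux_le_of_homogeneous 𝒜 P.2.1 fun x hx hxP => ?_
  by_contra hxQ
  rw [mem_closure_iff] at h
  obtain ⟨P', hP', hPP'⟩ := h _ (aux_isOpen_D 𝒜 hx) hxQ
  rw [Set.mem_singleton_iff] at hPP'
  subst hPP'
  exact hP' hxP

lemma aux_decompose_one : ((DirectSum.decompose 𝒜 (1 : R) 0 : 𝒜 0) : R) = 1 :=
  DirectSum.decompose_of_mem_same 𝒜 (SetLike.one_mem_graded 𝒜)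

/-- Degree-zero component of `c * a` for `a` of degree zero. -/
lemma aux_decompose_mul_right {a : R} (ha : a ∈ 𝒜 0) (c : R) :
    ((DirectSum.decompose 𝒜 (c * a) 0 : 𝒜 0) : R) =
      ((DirectSum.decompose 𝒜 c 0 : 𝒜 0) : R) * a := by
  induction c using DirectSum.Decomposition.inductionOn 𝒜 with
  | zero => simp
  | @homogeneous i m =>
    have hma : (m : R) * a ∈ 𝒜 i := by
      have := SetLike.mul_mem_graded m.2 ha
      rwa [add_zero] at this
    by_cases hi : i = 0
    · subst hi
      rw [DirectSum.decompose_of_mem_same 𝒜 hma, DirectSum.decompose_of_mem_same 𝒜 m.2]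
    · rw [DirectSum.decompose_of_mem_ne 𝒜 hma hi, DirectSum.decompose_of_mem_ne 𝒜 m.2 hi,
        zero_mul]
  | add x y hx hy =>
    rw [add_mul, DirectSum.decompose_add, DirectSum.decompose_add, DirectSum.add_apply,
      DirectSum.add_apply, AddSubgroup.coe_add, AddSubgroup.coe_add, hx, hy, add_mul]

/-- The key consequence of the Gelfand property: a "clopen-separating" identity. -/
lemma aux_star (hG : IsGelfandGraded 𝒜) {a b : R} (ha : a ∈ 𝒜 0) (hb : b ∈ 𝒜 0)
    (hab : a + b = 1) :
    ∃ r s : R, r ∈ 𝒜 0 ∧ s ∈ 𝒜 0 ∧ (1 + r * a) * (1 + s * b) = 0 := by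
  by_contra hcon
  push_neg at hcon
  set T : Set R := { x | ∃ r s : R, r ∈ 𝒜 0 ∧ s ∈ 𝒜 0 ∧ x = (1 + r * a) * (1 + s * b) } with hT
  have hT0 : (0 : R) ∉ T := by
    rintro ⟨r, s, hr, hs, h0⟩
    exact hcon r s hr hs h0.symm
  have hT1 : (1 : R) ∈ T := ⟨0, 0, zero_mem _, zero_mem _, by ring⟩
  have hTmul : ∀ x ∈ T, ∀ y ∈ T, x * y ∈ T := by
    rintro x ⟨r, s, hr, hs, rfl⟩ y ⟨r', s', hr', hs', rfl⟩
    refine ⟨r + r' + r * r' * a, s + s' + s * s' * b, ?_, ?_, by ring⟩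
    · refine add_mem (add_mem hr hr') ?_
      have := SetLike.mul_mem_graded (SetLike.mul_mem_graded hr hr') ha
      simpa using this
    · refine add_mem (add_mem hs hs') ?_
      have := SetLike.mul_mem_graded (SetLike.mul_mem_graded hs hs') hb
      simpa using this
  -- Zorn: a graded ideal maximal among those disjoint from T
  have hch : ∀ c ⊆ {J : Ideal R | J.IsHomogeneous 𝒜 ∧ ∀ x ∈ J, x ∉ T}, IsChain (· ≤ ·) c →
      ∀ y ∈ c, ∃ ub ∈ {J : Ideal R | J.IsHomogeneous 𝒜 ∧ ∀ x ∈ J, x ∉ T}, ∀ z ∈ c, z ≤ ub := by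
    intro c hcs hchain y hy
    refine ⟨sSup c, ⟨?_, ?_⟩, fun z hz => le_sSup hz⟩
    · intro i x hx
      obtain ⟨J, hJc, hxJ⟩ := (Submodule.mem_sSup_of_directed ⟨y, hy⟩
        (hchain.directedOn)).mp hx
      exact le_sSup hJc ((hcs hJc).1 i hxJ)
    · intro x hx
      obtain ⟨J, hJc, hxJ⟩ := (Submodule.mem_sSup_of_directed ⟨y, hy⟩
        (hchain.directedOn)).mp hx
      exact (hcs hJc).2 x hxJ
  obtain ⟨Q, -, hQmax⟩ := zorn_le_nonempty₀
      {J : Ideal R | J.IsHomogeneous 𝒜 ∧ ∀ x ∈ J, x ∉ T} hch ⊥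
      ⟨Ideal.IsHomogeneous.bot 𝒜, by intro x hx; rw [Ideal.mem_bot] at hx; subst hx; exact hT0⟩
  obtain ⟨hQh, hQT⟩ := hQmax.1
  -- Q is graded prime
  have hQne : Q ≠ ⊤ := fun h => hQT 1 (h ▸ Submodule.mem_top) hT1
  have hQprime : IsGradedPrime 𝒜 Q := by
    refine ⟨hQh, hQne, fun x y hx hy hxy => ?_⟩
    by_contra hcon2
    push_neg at hcon2
    obtain ⟨hxQ, hyQ⟩ := hcon2
    have key : ∀ z : R, SetLike.IsHomogeneousElem 𝒜 z → z ∉ Q →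
        ∃ t ∈ T, ∃ q ∈ Q, ∃ c : R, t = q + c * z := by
      intro z hz hzQ
      have hJh : (Q ⊔ Ideal.span {z}).IsHomogeneous 𝒜 :=
        hQh.sup (Ideal.homogeneous_span 𝒜 {z} (by rintro w rfl; exact hz))
      have hJnot : (Q ⊔ Ideal.span {z}) ∉
          {J : Ideal R | J.IsHomogeneous 𝒜 ∧ ∀ x ∈ J, x ∉ T} := by
        intro hmem
        have := hQmax.2 hmem le_sup_left
        exact hzQ (this (Submodule.mem_sup_right (Ideal.mem_span_singleton_self z)))
      simp only [Set.mem_setOf_eq, hJh, true_and, not_forall, not_not] at hJnot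
      obtain ⟨t, htJ, htT⟩ := hJnot
      obtain ⟨q, hq, w, hw, rfl⟩ := Submodule.mem_sup.mp htJ
      obtain ⟨c, rfl⟩ := Ideal.mem_span_singleton'.mp hw
      exact ⟨q + c * z, htT, q, hq, c, rfl⟩
    obtain ⟨t₁, ht₁T, q₁, hq₁, c₁, rfl⟩ := key x hx hxQ
    obtain ⟨t₂, ht₂T, q₂, hq₂, c₂, rfl⟩ := key y hy hyQ
    have hmem : (q₁ + c₁ * x) * (q₂ + c₂ * y) ∈ Q := by
      have : (q₁ + c₁ * x) * (q₂ + c₂ * y) =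
          q₁ * (q₂ + c₂ * y) + (c₁ * (x * q₂) + (c₁ * c₂) * (x * y)) := by ring
      rw [this]
      exact Q.add_mem (Q.mul_mem_right _ hq₁)
        (Q.add_mem (Q.mul_mem_left _ (Q.mul_mem_left _ hq₂)) (Q.mul_mem_left _ hxy))
    exact hQT _ hmem (hTmul _ ht₁T _ ht₂T)
  -- Q ⊔ (a) and Q ⊔ (b) are proper graded ideals
  have haux : ∀ z : R, z ∈ 𝒜 0 →
      (∀ r : R, r ∈ 𝒜 0 → 1 + r * z ∈ T) → Q ⊔ Ideal.span {z} ≠ ⊤ := by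
    intro z hz hzT htop
    have h1 : (1 : R) ∈ Q ⊔ Ideal.span {z} := htop ▸ Submodule.mem_top
    obtain ⟨q, hq, w, hw, h1⟩ := Submodule.mem_sup.mp h1
    obtain ⟨c, rfl⟩ := Ideal.mem_span_singleton'.mp hw
    -- take degree-zero components
    have hdec := congrArg (fun x : R => ((DirectSum.decompose 𝒜 x 0 : 𝒜 0) : R)) h1
    simp only [DirectSum.decompose_add, DirectSum.add_apply, AddSubgroup.coe_add] at hdec
    rw [aux_decompose_mul_right 𝒜 hz c, aux_decompose_one 𝒜] at hdec
    set q₀ : R := ((DirectSum.decompose 𝒜 q 0 : 𝒜 0) : R) with hq₀def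
    set c₀ : R := ((DirectSum.decompose 𝒜 c 0 : 𝒜 0) : R) with hc₀def
    have hq₀Q : q₀ ∈ Q := hQh 0 hq
    have hq₀T : q₀ ∈ T := by
      have hq0 : q₀ = 1 + (-c₀) * z := by linear_combination hdec
      rw [hq0]
      exact hzT (-c₀) (neg_mem (SetLike.coe_mem _))
    exact hQT _ hq₀Q hq₀T
  have haT : ∀ r : R, r ∈ 𝒜 0 → 1 + r * a ∈ T :=
    fun r hr => ⟨r, 0, hr, zero_mem _, by ring⟩
  have hbT : ∀ s : R, s ∈ 𝒜 0 → 1 + s * b ∈ T :=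
    fun s hs => ⟨0, s, zero_mem _, hs, by ring⟩
  have hQa : (Q ⊔ Ideal.span {a}).IsHomogeneous 𝒜 :=
    hQh.sup (Ideal.homogeneous_span 𝒜 {a} (by rintro w rfl; exact ⟨0, ha⟩))
  have hQb : (Q ⊔ Ideal.span {b}).IsHomogeneous 𝒜 :=
    hQh.sup (Ideal.homogeneous_span 𝒜 {b} (by rintro w rfl; exact ⟨0, hb⟩))
  obtain ⟨M₁, hM₁, hQM₁⟩ := aux_exists_gradedMaximal 𝒜 hQa (haux a ha haT)
  obtain ⟨M₂, hM₂, hQM₂⟩ := aux_exists_gradedMaximal 𝒜 hQb (haux b hb hbT)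
  obtain ⟨M, -, hMuniq⟩ := hG Q hQprime
  have e₁ : M₁ = M := hMuniq M₁ ⟨hM₁, le_trans le_sup_left hQM₁⟩
  have e₂ : M₂ = M := hMuniq M₂ ⟨hM₂, le_trans le_sup_left hQM₂⟩
  have haM : a ∈ M := e₁ ▸ hQM₁ (Submodule.mem_sup_right (Ideal.mem_span_singleton_self a))
  have hbM : b ∈ M := e₂ ▸ hQM₂ (Submodule.mem_sup_right (Ideal.mem_span_singleton_self b))
  have : (1 : R) ∈ M := hab ▸ M.add_mem haM hbM
  exact (e₁ ▸ hM₁.2.1 : M ≠ ⊤) ((Ideal.eq_top_iff_one M).mpr this)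

/-- The De Marco–Orsatti separation lemma. -/
lemma aux_L (hG : IsGelfandGraded 𝒜) {M : Ideal R} (hM : IsGradedMaximal 𝒜 M)
    {r : R} (hr : SetLike.IsHomogeneousElem 𝒜 r) (hrM : r ∉ M) :
    ∃ g : R, SetLike.IsHomogeneousElem 𝒜 g ∧ g ∉ M ∧
      ∀ Q : Ideal R, IsGradedPrime 𝒜 Q → g ∉ Q →
        ∀ N : Ideal R, IsGradedMaximal 𝒜 N → Q ≤ N → r ∉ N := by
  have htop : M ⊔ Ideal.span {r} = ⊤ := by
    by_contra hne
    have hJh : (M ⊔ Ideal.span {r}).IsHomogeneous 𝒜 :=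
      hM.1.sup (Ideal.homogeneous_span 𝒜 {r} (by rintro w rfl; exact hr))
    have := hM.2.2 _ hJh le_sup_left hne
    exact hrM (this ▸ Submodule.mem_sup_right (Ideal.mem_span_singleton_self r))
  have h1 : (1 : R) ∈ M ⊔ Ideal.span {r} := htop ▸ Submodule.mem_top
  obtain ⟨m, hm, y, hy, h1⟩ := Submodule.mem_sup.mp h1
  set a : R := ((DirectSum.decompose 𝒜 m 0 : 𝒜 0) : R) with hadef
  set b : R := ((DirectSum.decompose 𝒜 y 0 : 𝒜 0) : R) with hbdef
  have haM : a ∈ M := hM.1 0 hm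
  have hbspan : b ∈ Ideal.span {r} :=
    (Ideal.homogeneous_span 𝒜 {r} (by rintro w rfl; exact hr)) 0 hy
  have hab : a + b = 1 := by
    have hdec := congrArg (fun x : R => ((DirectSum.decompose 𝒜 x 0 : 𝒜 0) : R)) h1
    simp only [DirectSum.decompose_add, DirectSum.add_apply, AddSubgroup.coe_add] at hdec
    rw [aux_decompose_one 𝒜] at hdec
    exact hdec
  obtain ⟨u, s, hu, hs, heq⟩ := aux_star 𝒜 hG (SetLike.coe_mem _) (SetLike.coe_mem _) hab
  refine ⟨1 + u * a, ⟨0, ?_⟩, ?_, ?_⟩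
  · refine add_mem (SetLike.one_mem_graded 𝒜) ?_
    have := SetLike.mul_mem_graded hu (SetLike.coe_mem (DirectSum.decompose 𝒜 m 0))
    simpa using this
  · intro hgM
    have : (1 : R) ∈ M := by
      have : (1 : R) = (1 + u * a) - u * a := by ring
      rw [this]
      exact M.sub_mem hgM (M.mul_mem_left u haM)
    exact hM.2.1 ((Ideal.eq_top_iff_one M).mpr this)
  · intro Q hQ hgQ N hN hQN hrN
    have hg0 : (1 + u * a) ∈ 𝒜 0 := by
      refine add_mem (SetLike.one_mem_graded 𝒜) ?_
      have := SetLike.mul_mem_graded hu (SetLike.coe_mem (DirectSum.decompose 𝒜 m 0))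
      simpa using this
    have hsb0 : (1 + s * b) ∈ 𝒜 0 := by
      refine add_mem (SetLike.one_mem_graded 𝒜) ?_
      have := SetLike.mul_mem_graded hs (SetLike.coe_mem (DirectSum.decompose 𝒜 y 0))
      simpa using this
    have hzero : (1 + u * a) * (1 + s * b) ∈ Q := by rw [heq]; exact Q.zero_mem
    have := hQ.2.2 _ _ ⟨0, hg0⟩ ⟨0, hsb0⟩ hzero
    rcases this with h | h
    · exact hgQ h
    · have hsbN : 1 + s * b ∈ N := hQN h
      have hbN : b ∈ N := (Ideal.span_singleton_le_iff_mem N).mpr hrN hbspan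
      have : (1 : R) ∈ N := by
        have : (1 : R) = (1 + s * b) - s * b := by ring
        rw [this]
        exact N.sub_mem hsbN (N.mul_mem_left s hbN)
      exact hN.2.1 ((Ideal.eq_top_iff_one N).mpr this)

end AuxLemmas

section Statements

variable {G : Type*} [AddGroup G] [DecidableEq G] {R : Type*} [CommRing R]
variable (𝒜 : G → AddSubgroup R) [GradedRing 𝒜]

theorem stmt_3 : IsGelfandGraded 𝒜 ↔
    ∃ φ : GSpec 𝒜 → (GMax 𝒜 : Set (GSpec 𝒜)), Continuous φ ∧
      ∀ (M : GSpec 𝒜) (hM : M ∈ GMax 𝒜), φ M = ⟨M, hM⟩ := by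
  constructor
  · intro hG
    choose μ hμ hμuniq using fun P : GSpec 𝒜 => hG P.1 P.2
    have hμmax : ∀ P : GSpec 𝒜, IsGradedMaximal 𝒜 (μ P) := fun P => (hμ P).1
    have hμle : ∀ P : GSpec 𝒜, P.1 ≤ μ P := fun P => (hμ P).2
    let ψ : GSpec 𝒜 → GSpec 𝒜 := fun P => ⟨μ P, aux_gradedMaximal_isGradedPrime 𝒜 (hμmax P)⟩
    have hψmem : ∀ P : GSpec 𝒜, ψ P ∈ GMax 𝒜 := fun P => hμmax P
    have hψcont : Continuous ψ := by
      rw [continuous_generateFrom_iff]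
      rintro s ⟨r, hr, rfl⟩
      rw [isOpen_iff_forall_mem_open]
      intro P₀ hP₀
      obtain ⟨g, hg, hgM, hkey⟩ := aux_L 𝒜 hG (hμmax P₀) hr hP₀
      refine ⟨{ Q : GSpec 𝒜 | g ∉ Q.1 }, ?_, aux_isOpen_D 𝒜 hg, ?_⟩
      · intro Q hgQ
        exact hkey Q.1 Q.2 hgQ (μ Q) (hμmax Q) (hμle Q)
      · exact fun hgP₀ => hgM (hμle P₀ hgP₀)
    refine ⟨fun P => ⟨ψ P, hψmem P⟩, hψcont.subtype_mk _, ?_⟩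
    intro M hM
    have : μ M = M.1 := hM.2.2 (μ M) (hμmax M).1 (hμle M) (hμmax M).2.1
    exact Subtype.ext (Subtype.ext this)
  · rintro ⟨φ, hcont, hfix⟩ P hP
    set Ppt : GSpec 𝒜 := ⟨P, hP⟩ with hPpt
    have key : ∀ N : Ideal R, IsGradedMaximal 𝒜 N → P ≤ N → N = (φ Ppt).1.1 := by
      intro N hN hPN
      set Npt : GSpec 𝒜 := ⟨N, aux_gradedMaximal_isGradedPrime 𝒜 hN⟩ with hNpt
      have h1 : Npt ∈ closure {Ppt} := aux_mem_closure_of_le 𝒜 hPN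
      have h2 : φ Npt ∈ closure (φ '' {Ppt}) :=
        image_closure_subset_closure_image hcont ⟨Npt, h1, rfl⟩
      rw [Set.image_singleton] at h2
      rw [hfix Npt hN] at h2
      rw [closure_subtype] at h2
      rw [Set.image_singleton] at h2
      have h3 : (φ Ppt).1.1 ≤ N := aux_le_of_mem_closure 𝒜 h2
      exact ((φ Ppt).2 : IsGradedMaximal 𝒜 (φ Ppt).1.1).2.2 N hN.1 h3 hN.2.1
    obtain ⟨M, hM, hPM⟩ := aux_exists_gradedMaximal 𝒜 hP.1 hP.2.1
    refine ⟨M, ⟨hM, hPM⟩, ?_⟩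
    rintro N ⟨hN, hPN⟩
    rw [key N hN hPN, key M hM hPM]
end Statements
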